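/- Let t = ∏_{s=2}^{l}(x_{h(s)} - x_{-h(s-1)}) / ∏_{s=1}^{l}(x_{h(s)} - x_{-h(s)}), where all the factors x_{h(s)} - x_{-h(s)} and x_{h(s)} - x_{-h(s-1)} are units in a commutative ring A. Then t is a unit in A, and if φ = φ₁ ⋯ φ_l is a product of matrices φ_s = (x_{h(s)} - x_{-h(s)})^{-1} [[x_{h(s)}, -x_{h(s)}x_{-h(s)}],[1, -x_{-h(s)}]] (the y = 0 specializations), then φ = t·[[x_{h(1)}, -x_{h(1)} x_{-h(l)}],[1, -x_{-h(l)}]]. -/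

import Mathlib

private lemma Mmul {A : Type*} [CommRing A] (a b c d : A) :
    (!![a, -(a*b); 1, -b] : Matrix (Fin 2) (Fin 2) A) * !![c, -(c*d); 1, -d]
      = (c - b) • !![a, -(a*d); 1, -d] := by
  ext i j
  fin_cases i <;> fin_cases j <;>
    simp [Matrix.mul_apply, Fin.sum_univ_two] <;> ring

private lemma keylem {A : Type*} [CommRing A] (l : ℕ) (x x' : Fin (l + 1) → A) :
    (List.ofFn fun s : Fin (l + 1) =>
        Ring.inverse (x s - x' s) •
          (!![x s, -(x s * x' s); 1, -(x' s)] : Matrix (Fin 2) (Fin 2) A)).prod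
      = ((∏ s, Ring.inverse (x s - x' s)) * ∏ s : Fin l, (x s.succ - x' s.castSucc)) •
        !![x 0, -(x 0 * x' (Fin.last l)); 1, -(x' (Fin.last l))] := by
  induction l with
  | zero => simp
  | succ l ih =>
    rw [List.ofFn_succ', List.concat_eq_append, List.prod_append, List.prod_singleton,
      ih (fun s => x s.castSucc) (fun s => x' s.castSucc)]
    rw [smul_mul_assoc, mul_smul_comm, Mmul, smul_smul, smul_smul]
    congr 1
    · rw [Fin.prod_univ_castSucc (f := fun s => Ring.inverse (x s - x' s)),
        Fin.prod_univ_castSucc (f := fun s : Fin (l+1) => (x s.succ - x' s.castSucc))]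
      simp
      ring

theorem stmt_19 {A : Type*} [CommRing A] (l : ℕ)
    (x x' : Fin (l + 1) → A)
    (h1 : ∀ s, IsUnit (x s - x' s))
    (h2 : ∀ s : Fin l, IsUnit (x s.succ - x' s.castSucc)) :
    let t : A := Ring.inverse (∏ s, (x s - x' s)) *
      ∏ s : Fin l, (x s.succ - x' s.castSucc)
    let φ : Matrix (Fin 2) (Fin 2) A :=
      (List.ofFn fun s : Fin (l + 1) =>
        Ring.inverse (x s - x' s) •
          (!![x s, -(x s * x' s); 1, -(x' s)] : Matrix (Fin 2) (Fin 2) A)).prod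
    IsUnit t ∧
    φ = t • !![x 0, -(x 0 * x' (Fin.last l)); 1, -(x' (Fin.last l))] := by
  intro t φ
  have hinv : Ring.inverse (∏ s, (x s - x' s)) = ∏ s, Ring.inverse (x s - x' s) := by
    exact map_prod (MonoidWithZero.inverse (M := A)) (fun s => x s - x' s) Finset.univ
  constructor
  · apply IsUnit.mul
    · rw [isUnit_ringInverse]
      exact Finset.univ.prod_induction _ IsUnit (fun _ _ => IsUnit.mul) isUnit_one
        (fun s _ => h1 s)
    · exact Finset.univ.prod_induction _ IsUnit (fun _ _ => IsUnit.mul) isUnit_one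
        (fun s _ => h2 s)
  · have ht : t = (∏ s, Ring.inverse (x s - x' s)) * ∏ s : Fin l, (x s.succ - x' s.castSucc) := by
      show Ring.inverse _ * _ = _
      rw [hinv]
    rw [show φ = _ from keylem l x x', ht]
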